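/- For positive integers k, z with k ≤ z − 1 and 0 < p < 1, the binomial tail satisfies the reverse Chernoff bound B_{z,k}(p) ≥ (1/(e·√k)) · exp(−z·D(k/z ‖ p)). -/

import Mathlib

/-- Binomial cumulative distribution function B_{z,k}(p). -/
noncomputable def binCDF (z k : ℕ) (p : ℝ) : ℝ :=
  ∑ j ∈ Finset.range (k + 1), (z.choose j : ℝ) * p ^ j * (1 - p) ^ (z - j)

/-- Binary relative entropy. -/
noncomputable def binRelEnt (p q : ℝ) : ℝ :=
  p * Real.log (p / q) + (1 - p) * Real.log ((1 - p) / (1 - q))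

section ChernoffAux
open Real Finset

lemma chernoff_L1 {t : ℝ} (h0 : 0 ≤ t) (h1 : t ≤ 1/2) :
    Real.exp (2*t) * (1-t) ≤ 1 + t := by
  have h2t0 : (0:ℝ) ≤ 2*t := by linarith
  have h2t1 : 2*t ≤ 1 := by linarith
  have hb := Real.exp_bound' h2t0 h2t1 (n := 4) (by norm_num)
  have : Real.exp (2*t) ≤ 1 + 2*t + 2*t^2 + (4/3)*t^3 + (5/6)*t^4 := by
    calc Real.exp (2*t) ≤ _ := hb
    _ ≤ 1 + 2*t + 2*t^2 + (4/3)*t^3 + (5/6)*t^4 := by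
        rw [Finset.sum_range_succ, Finset.sum_range_succ, Finset.sum_range_succ,
          Finset.sum_range_one]
        norm_num [Nat.factorial]; ring_nf; nlinarith [pow_nonneg h0 3, pow_nonneg h0 4]
  nlinarith [pow_nonneg h0 3, pow_nonneg h0 4, pow_nonneg h0 5, mul_nonneg (pow_nonneg h0 4) h0]

/-- e² ≤ ((k+1)/k)^(2k+1). -/
lemma chernoff_L2 (k : ℕ) (hk : 1 ≤ k) :
    Real.exp 1 ^ 2 * (k:ℝ) ^ (2*k+1) ≤ ((k:ℝ)+1) ^ (2*k+1) := by
  have hkR : (1:ℝ) ≤ (k:ℝ) := by exact_mod_cast hk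
  set t : ℝ := 1/(2*k+1) with ht
  have htpos : 0 < t := by positivity
  have ht2 : t ≤ 1/2 := by
    rw [ht, div_le_div_iff₀ (by positivity) (by norm_num)]; linarith
  have h1 := chernoff_L1 htpos.le ht2
  have hden : (0:ℝ) < 2*(k:ℝ)+1 := by linarith
  have hdnz : (2*(k:ℝ)+1) ≠ 0 := ne_of_gt hden
  have hknz : (k:ℝ) ≠ 0 := by positivity
  have h1t : (0:ℝ) < 1 - t := by
    have : t < 1 := lt_of_le_of_lt ht2 (by norm_num)
    linarith
  have hexp : Real.exp (2*t) ≤ ((k:ℝ)+1)/k := by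
    have heq : (1+t)/(1-t) = ((k:ℝ)+1)/k := by
      rw [ht]; rw [div_eq_div_iff (by linarith) (by positivity)]; field_simp; ring
    rw [← heq, le_div_iff₀ h1t]
    exact h1
  have hpow : Real.exp (2*t) ^ (2*k+1) ≤ (((k:ℝ)+1)/k) ^ (2*k+1) :=
    pow_le_pow_left₀ (Real.exp_nonneg _) hexp _
  have hid : Real.exp (2*t) ^ (2*k+1) = Real.exp 1 ^ 2 := by
    rw [← Real.exp_nat_mul, ← Real.exp_nat_mul]
    congr 1
    rw [ht]
    push_cast
    field_simp
  rw [hid] at hpow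
  have := mul_le_mul_of_nonneg_right hpow (by positivity : (0:ℝ) ≤ (k:ℝ)^(2*k+1))
  calc Real.exp 1 ^2 * (k:ℝ)^(2*k+1) ≤ (((k:ℝ)+1)/k)^(2*k+1) * (k:ℝ)^(2*k+1) := this
    _ = ((k:ℝ)+1)^(2*k+1) := by
        rw [div_pow, div_mul_cancel₀]
        positivity

/-- Stirling upper bound, squared form: (k!)² e^{2k} ≤ e² k^{2k+1}. -/
lemma chernoff_L3 (k : ℕ) (hk : 1 ≤ k) :
    ((k.factorial : ℝ))^2 * Real.exp 1 ^ (2*k) ≤ Real.exp 1 ^ 2 * (k:ℝ)^(2*k+1) := by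
  induction k with
  | zero => omega
  | succ n ih =>
    rcases Nat.eq_zero_or_pos n with h | h
    · subst h; norm_num [Nat.factorial]
    · have hn : 1 ≤ n := h
      have ihn := ih hn
      have hL2 := chernoff_L2 n hn
      have he : (0:ℝ) < Real.exp 1 := Real.exp_pos 1
      have hstep : ((n.factorial : ℝ) * (n+1))^2 * Real.exp 1 ^ (2*(n+1))
          ≤ Real.exp 1 ^2 * ((n:ℝ)+1)^(2*(n+1)+1) := by
        have e1 : ((n.factorial : ℝ) * (n+1))^2 * Real.exp 1 ^ (2*(n+1))
            = (((n.factorial:ℝ))^2 * Real.exp 1 ^(2*n)) * (((n:ℝ)+1)^2 * Real.exp 1 ^2) := by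
          ring
        rw [e1]
        calc (((n.factorial:ℝ))^2 * Real.exp 1 ^(2*n)) * (((n:ℝ)+1)^2 * Real.exp 1 ^2)
            ≤ (Real.exp 1 ^2 * (n:ℝ)^(2*n+1)) * (((n:ℝ)+1)^2 * Real.exp 1 ^2) := by
              apply mul_le_mul_of_nonneg_right ihn (by positivity)
          _ ≤ (Real.exp 1 ^2 * ((n:ℝ)+1)^(2*n+1) / Real.exp 1 ^2) * (((n:ℝ)+1)^2 * Real.exp 1 ^2) := by
              apply mul_le_mul_of_nonneg_right _ (by positivity)
              rw [le_div_iff₀ (by positivity)]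
              calc Real.exp 1 ^2 * (n:ℝ)^(2*n+1) * Real.exp 1 ^2
                  = (Real.exp 1 ^2 * (n:ℝ)^(2*n+1)) * Real.exp 1 ^2 := by ring
                _ ≤ ((n:ℝ)+1)^(2*n+1) * Real.exp 1 ^2 :=
                    mul_le_mul_of_nonneg_right hL2 (by positivity)
                _ = Real.exp 1 ^2 * ((n:ℝ)+1)^(2*n+1) := by ring
          _ = Real.exp 1 ^2 * ((n:ℝ)+1)^(2*(n+1)+1) := by
              field_simp; ring
      calc (((n+1).factorial : ℝ))^2 * Real.exp 1 ^ (2*(n+1))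
          = ((n.factorial : ℝ) * (n+1))^2 * Real.exp 1 ^ (2*(n+1)) := by
            rw [Nat.factorial_succ]; push_cast; ring
        _ ≤ Real.exp 1 ^2 * ((n:ℝ)+1)^(2*(n+1)+1) := hstep
        _ = Real.exp 1 ^2 * ((n+1:ℕ):ℝ)^(2*(n+1)+1) := by push_cast; ring

/-- (n+1)^n ≤ e^n · n^n, i.e. (1+1/n)^n ≤ e. -/
lemma chernoff_L4 (n : ℕ) (hn : 1 ≤ n) :
    ((n:ℝ)+1)^n ≤ Real.exp 1 * (n:ℝ)^n := by
  have hnR : (0:ℝ) < n := by exact_mod_cast hn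
  have h1 : (n:ℝ)+1 ≤ (n:ℝ) * Real.exp (1/n) := by
    have := Real.add_one_le_exp (1/(n:ℝ))
    calc (n:ℝ)+1 = (n:ℝ) * (1/n + 1) := by field_simp; ring
      _ ≤ (n:ℝ) * Real.exp (1/n) := by
          apply mul_le_mul_of_nonneg_left this hnR.le
  calc ((n:ℝ)+1)^n ≤ ((n:ℝ) * Real.exp (1/n))^n := by
        apply pow_le_pow_left₀ (by positivity) h1
    _ = (n:ℝ)^n * Real.exp (1/n) ^ n := mul_pow _ _ _
    _ = Real.exp 1 * (n:ℝ)^n := by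
        rw [← Real.exp_nat_mul]
        rw [mul_one_div, div_self (ne_of_gt hnR)]
        ring

/-- (m+k)^(m+k) · m! ≤ (m+k)! · m^m · e^k. -/
lemma chernoff_L5 (m : ℕ) (hm : 1 ≤ m) (k : ℕ) :
    ((m+k:ℕ):ℝ)^(m+k) * (m.factorial : ℝ) ≤
      ((m+k).factorial : ℝ) * (m:ℝ)^m * Real.exp 1 ^ k := by
  induction k with
  | zero =>
    simp
    calc ((m:ℕ):ℝ)^m * (m.factorial : ℝ) = (m.factorial : ℝ) * (m:ℝ)^m := by ring
      _ ≤ _ := le_refl _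
  | succ k ih =>
    have hmk : 1 ≤ m + k := by omega
    have hL4 := chernoff_L4 (m+k) hmk
    have hfpos : (0:ℝ) < ((m+k).factorial : ℝ) := by exact_mod_cast (m+k).factorial_pos
    have hcast : ((m+(k+1):ℕ):ℝ) = ((m+k:ℕ):ℝ) + 1 := by push_cast; ring
    have hstep : ((m+(k+1):ℕ):ℝ)^(m+(k+1)) * (m.factorial : ℝ)
        = (((m+k:ℕ):ℝ)+1)^(m+k) * (((m+k:ℕ):ℝ)+1) * (m.factorial : ℝ) := by
      rw [hcast]; ring
    rw [hstep]
    have h2 : (((m+k:ℕ):ℝ)+1)^(m+k) * (((m+k:ℕ):ℝ)+1) * (m.factorial : ℝ)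
        ≤ (Real.exp 1 * ((m+k:ℕ):ℝ)^(m+k)) * (((m+k:ℕ):ℝ)+1) * (m.factorial : ℝ) := by
      apply mul_le_mul_of_nonneg_right _ (by positivity)
      apply mul_le_mul_of_nonneg_right hL4 (by positivity)
    refine h2.trans ?_
    have h3 : (Real.exp 1 * ((m+k:ℕ):ℝ)^(m+k)) * (((m+k:ℕ):ℝ)+1) * (m.factorial : ℝ)
        = (((m+k:ℕ):ℝ)^(m+k) * (m.factorial : ℝ)) * ((((m+k:ℕ):ℝ)+1) * Real.exp 1) := by
      ring
    rw [h3]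
    have h4 := mul_le_mul_of_nonneg_right ih
      (by positivity : (0:ℝ) ≤ (((m+k:ℕ):ℝ)+1) * Real.exp 1)
    refine h4.trans (le_of_eq ?_)
    have hfs : (((m+(k+1)).factorial : ℕ):ℝ) = (((m+k:ℕ):ℝ)+1) * ((m+k).factorial : ℝ) := by
      have : m + (k+1) = (m+k) + 1 := by ring
      rw [this, Nat.factorial_succ]
      push_cast; ring
    rw [hfs]
    ring

/-- z^z ≤ C(z,k) · k^k · (z-k)^(z-k) · e·√k. -/
lemma chernoff_L6 (z k : ℕ) (hk : 1 ≤ k) (hkz : k + 1 ≤ z) :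
    ((z:ℝ))^z ≤ (z.choose k : ℝ) * (k:ℝ)^k * ((z-k:ℕ):ℝ)^(z-k) *
      (Real.exp 1 * Real.sqrt k) := by
  set m := z - k with hm
  have hmz : m + k = z := by omega
  have hm1 : 1 ≤ m := by omega
  have hkR : (0:ℝ) < k := by exact_mod_cast hk
  -- Stirling: k! * e^k ≤ e * √k * k^k
  have hS : (k.factorial : ℝ) * Real.exp 1 ^ k ≤ Real.exp 1 * Real.sqrt k * (k:ℝ)^k := by
    have h3 := chernoff_L3 k hk
    have hleft : ((k.factorial : ℝ) * Real.exp 1 ^ k)^2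
        = ((k.factorial : ℝ))^2 * Real.exp 1 ^ (2*k) := by
      rw [mul_pow, ← pow_mul]; ring_nf
    have hright : (Real.exp 1 * Real.sqrt k * (k:ℝ)^k)^2
        = Real.exp 1 ^ 2 * (k:ℝ)^(2*k+1) := by
      rw [mul_pow, mul_pow, Real.sq_sqrt hkR.le, ← pow_mul]
      ring
    have hsq : ((k.factorial : ℝ) * Real.exp 1 ^ k)^2
        ≤ (Real.exp 1 * Real.sqrt k * (k:ℝ)^k)^2 := by
      rw [hleft, hright]; exact h3
    exact (pow_le_pow_iff_left₀ (by positivity) (by positivity) (by norm_num)).1 hsq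
  have h5 := chernoff_L5 m hm1 k
  rw [hmz] at h5
  have hfac : (z.factorial : ℝ) = (z.choose k : ℝ) * (k.factorial : ℝ) * (m.factorial : ℝ) := by
    have := Nat.choose_mul_factorial_mul_factorial (by omega : k ≤ z)
    exact_mod_cast congrArg (Nat.cast (R := ℝ)) this.symm
  rw [hfac] at h5
  have hmfpos : (0:ℝ) < (m.factorial : ℝ) := by exact_mod_cast m.factorial_pos
  -- z^z ≤ C * k! * e^k * m^m
  have h6 : ((z:ℝ))^z ≤ (z.choose k : ℝ) * ((k.factorial : ℝ) * Real.exp 1 ^ k) * (m:ℝ)^m := by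
    have := le_of_mul_le_mul_right (by linarith [h5] :
      ((z:ℝ))^z * (m.factorial : ℝ) ≤
        ((z.choose k : ℝ) * ((k.factorial : ℝ) * Real.exp 1 ^ k) * (m:ℝ)^m) * (m.factorial : ℝ))
      hmfpos
    exact this
  calc ((z:ℝ))^z ≤ (z.choose k : ℝ) * ((k.factorial : ℝ) * Real.exp 1 ^ k) * (m:ℝ)^m := h6
    _ ≤ (z.choose k : ℝ) * (Real.exp 1 * Real.sqrt k * (k:ℝ)^k) * (m:ℝ)^m := by
        apply mul_le_mul_of_nonneg_right _ (by positivity)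
        apply mul_le_mul_of_nonneg_left hS (by positivity)
    _ = (z.choose k : ℝ) * (k:ℝ)^k * ((m:ℕ):ℝ)^m * (Real.exp 1 * Real.sqrt k) := by
        push_cast; ring

end ChernoffAux

open Real Finset in
theorem stmt_4 (z k : ℕ) (hk : 1 ≤ k) (hkz : k + 1 ≤ z) (p : ℝ)
    (hp0 : 0 < p) (hp1 : p < 1) :
    1 / (Real.exp 1 * Real.sqrt k) *
      Real.exp (-(z : ℝ) * binRelEnt ((k : ℝ) / (z : ℝ)) p) ≤ binCDF z k p := by
  set m := z - k with hm
  have hmz : k + m = z := by omega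
  have hkR : (0:ℝ) < k := by exact_mod_cast hk
  have hzR : (0:ℝ) < z := by exact_mod_cast (by omega : 0 < z)
  have hmR : (0:ℝ) < m := by exact_mod_cast (by omega : 0 < m)
  have hcast : (k:ℝ) + m = z := by exact_mod_cast hmz
  have hq : (0:ℝ) < 1 - p := by linarith
  have hA : (0:ℝ) < (z:ℝ)*p/k := by positivity
  have hB : (0:ℝ) < (z:ℝ)*(1-p)/m := by positivity
  -- entropy computation
  have hent : Real.exp (-(z:ℝ) * binRelEnt ((k:ℝ)/(z:ℝ)) p)
      = ((z:ℝ)*p/k)^k * ((z:ℝ)*(1-p)/m)^m := by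
    unfold binRelEnt
    have h1x : 1 - (k:ℝ)/z = (m:ℝ)/z := by
      field_simp; linarith
    rw [h1x]
    have e1 : ((k:ℝ)/z)/p = ((z:ℝ)*p/k)⁻¹ := by
      rw [inv_div]; field_simp
    have e2 : ((m:ℝ)/z)/(1-p) = ((z:ℝ)*(1-p)/m)⁻¹ := by
      rw [inv_div]; field_simp
    rw [e1, e2, Real.log_inv, Real.log_inv]
    have e3 : -(z:ℝ) * ((k:ℝ)/z * -Real.log ((z:ℝ)*p/k) + (m:ℝ)/z * -Real.log ((z:ℝ)*(1-p)/m))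
        = (k:ℝ) * Real.log ((z:ℝ)*p/k) + (m:ℝ) * Real.log ((z:ℝ)*(1-p)/m) := by
      field_simp; ring
    rw [e3, Real.exp_add, Real.exp_nat_mul, Real.exp_nat_mul, Real.exp_log hA, Real.exp_log hB]
  -- single term lower bound for binCDF
  have hterm : (z.choose k : ℝ) * p^k * (1-p)^m ≤ binCDF z k p := by
    unfold binCDF
    rw [hm]
    exact Finset.single_le_sum (f := fun j => (z.choose j : ℝ) * p^j * (1-p)^(z-j))
      (fun i _ => by positivity) (Finset.self_mem_range_succ k)
  refine le_trans ?_ hterm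
  rw [hent]
  have hL6 := chernoff_L6 z k hk hkz
  rw [← hm] at hL6
  have hzz : (z:ℝ)^k * (z:ℝ)^m = (z:ℝ)^z := by rw [← pow_add, hmz]
  have hLHS : 1/(Real.exp 1 * Real.sqrt k) * (((z:ℝ)*p/k)^k * ((z:ℝ)*(1-p)/m)^m)
      = ((z:ℝ)^z * (p^k * (1-p)^m)) / ((k:ℝ)^k * (m:ℝ)^m * (Real.exp 1 * Real.sqrt k)) := by
    rw [div_pow, div_pow, mul_pow, mul_pow, ← hzz]
    have hek : (0:ℝ) < Real.exp 1 := Real.exp_pos 1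
    have hsk : (0:ℝ) < Real.sqrt k := Real.sqrt_pos.2 hkR
    field_simp
  rw [hLHS, div_le_iff₀ (by positivity)]
  calc (z:ℝ)^z * (p^k * (1-p)^m)
      ≤ ((z.choose k : ℝ) * (k:ℝ)^k * (m:ℝ)^m * (Real.exp 1 * Real.sqrt k)) * (p^k * (1-p)^m) := by
        apply mul_le_mul_of_nonneg_right _ (by positivity)
        exact_mod_cast hL6
    _ = (z.choose k : ℝ) * p^k * (1-p)^m * ((k:ℝ)^k * (m:ℝ)^m * (Real.exp 1 * Real.sqrt k)) := by
        ring
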